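/- arXiv:2308.09352 — 3 statements merged into one kernel-verified Lean document; each statement's English description precedes it below -/
import Mathlib

section
/- Let (X,T) be a Cantor system and let ρ ≤ 1 be a compatible metric on X. Say that a subset A ⊆ X has the finite covering property if there is some N ∈ ℕ such that ⋃_{−N ≤ n ≤ N} T^n A = X. Then the following are equivalent: (1) (X,T) is essentially minimal; (2) for every clopen set A ⊆ X with precision the finite covering property, there is a clopen subset B ⊆ A with the finite covering property such that diam(B) ≤ diam(A)/2. -/
namespace SubshiftRank

/-! ### Words over the alphabet {0,1}; `false` plays the role of `0`, `true` of `1`. -/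

abbrev Word := List Bool

/-- `ℱ`: the set of finite nonempty words over `{0,1}` beginning and ending with `0`. -/
def FF : Set Word := {w | w ≠ [] ∧ w.head? = some false ∧ w.getLast? = some false}

/-- `spacer s = 1^s`. -/
def spacer (s : ℕ) : Word := List.replicate s true

/-- A building: a sequence of words `v₁, …, v_k` with spacers `s₁, …, s_k` (the `pairs`),
followed by a final word `v_{k+1}` (the `last`).  The assembled word is
`v₁1^{s₁}v₂1^{s₂}⋯v_k1^{s_k}v_{k+1}`. -/
structure Building where
  pairs : List (Word × ℕ)
  last : Word

/-- The word assembled by a building. -/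
def Building.word (b : Building) : Word :=
  b.pairs.foldr (fun p acc => p.1 ++ spacer p.2 ++ acc) b.last

/-- The words `v₁, …, v_{k+1}` used in a building (in order). -/
def Building.pieces (b : Building) : List Word := b.pairs.map Prod.fst ++ [b.last]

/-- `b` is a building from the set `S`: there is at least one spacer (i.e. `k ≥ 1`, at least
two pieces) and all the pieces belong to `S`. -/
def Building.FromSet (b : Building) (S : Set Word) : Prop :=
  b.pairs ≠ [] ∧ ∀ v ∈ b.pieces, v ∈ S

/-- The first word of a building. -/
def Building.firstPiece (b : Building) : Word := b.pieces.headI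

/-- Every word of `S` is used in the building. -/
def Building.UsesAll (b : Building) (S : Set Word) : Prop := ∀ v ∈ S, v ∈ b.pieces

/-- The spacer parameter of the building is bounded by `M`. -/
def Building.SpacersLE (b : Building) (M : ℕ) : Prop := ∀ p ∈ b.pairs, p.2 ≤ M

/-- `w` is built from `S`. -/
def BuiltFrom (w : Word) (S : Set Word) : Prop := ∃ b : Building, b.FromSet S ∧ b.word = w

/-- The `i`-th level `S_i = {v_{i,1}, …, v_{i,n_i}}` of a generating sequence. -/
def levelSet (ni : ℕ → ℕ) (wd : ℕ → ℕ → Word) (i : ℕ) : Set Word :=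
  {w | ∃ j, 1 ≤ j ∧ j ≤ ni i ∧ wd i j = w}

/-- A (symbolic) rank-`n` construction: a rank-`n` generating sequence `v_{i,j}`
(`i ≥ 0`, `1 ≤ j ≤ n_i ≤ n`) together with, for each `i` and `1 ≤ j ≤ n_{i+1}`, one chosen
building of `v_{i+1,j}` from `S_i`, the building of `v_{i+1,1}` starting with `v_{i,1}`. -/
structure RankConstruction (n : ℕ) where
  ni : ℕ → ℕ
  wd : ℕ → ℕ → Word
  bld : ℕ → ℕ → Building
  ni_pos : ∀ i, 1 ≤ ni i
  ni_le : ∀ i, ni i ≤ n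
  mem_FF : ∀ i j, 1 ≤ j → j ≤ ni i → wd i j ∈ FF
  wd_zero : ∀ j, 1 ≤ j → j ≤ ni 0 → wd 0 j = [false]
  bld_from : ∀ i j, 1 ≤ j → j ≤ ni (i + 1) → (bld i j).FromSet (levelSet ni wd i)
  bld_word : ∀ i j, 1 ≤ j → j ≤ ni (i + 1) → (bld i j).word = wd (i + 1) j
  bld_start : ∀ i, (bld i 1).firstPiece = wd i 1

/-- A rank-`n` construction is proper if `n_i = n` for all `i` and every word of `S_i` is used
in each chosen building. -/
def RankConstruction.Proper {n : ℕ} (c : RankConstruction n) : Prop :=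
  (∀ i, c.ni i = n) ∧
    ∀ i j, 1 ≤ j → j ≤ c.ni (i + 1) → (c.bld i j).UsesAll (levelSet c.ni c.wd i)

/-- All spacer parameters of all chosen buildings are bounded by `M`. -/
def RankConstruction.SpacersBoundedBy {n : ℕ} (c : RankConstruction n) (M : ℕ) : Prop :=
  ∀ i j, 1 ≤ j → j ≤ c.ni (i + 1) → (c.bld i j).SpacersLE M

/-- The spacer parameter of the construction is bounded. -/
def RankConstruction.BoundedSpacer {n : ℕ} (c : RankConstruction n) : Prop :=
  ∃ M, c.SpacersBoundedBy M

/-- `w` is of the form `α1^{s₁}v_{j₁}1^{s₂}v_{j₂}⋯v_{j_{k−1}}1^{s_k}β` where `k ≥ 1`, the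
middle words belong to `S`, `α` is a nonempty suffix of a word of `S` and `β` is a nonempty
prefix of a word of `S`. -/
def BadDecomp (w : Word) (S : Set Word) : Prop :=
  ∃ (α β : Word) (mids : List (ℕ × Word)) (sk : ℕ),
    α ≠ [] ∧ β ≠ [] ∧ (∃ a ∈ S, α <:+ a) ∧ (∃ b ∈ S, β <+: b) ∧
    (∀ p ∈ mids, p.2 ∈ S) ∧
    w = α ++ mids.foldr (fun p acc => spacer p.1 ++ p.2 ++ acc) (spacer sk ++ β)

/-- A rank-`n` construction is good if it is proper and no `v_{i,j}` has a bad decomposition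
over `S_i`. -/
def RankConstruction.Good {n : ℕ} (c : RankConstruction n) : Prop :=
  c.Proper ∧ ∀ i j, 1 ≤ j → j ≤ c.ni i → ¬ BadDecomp (c.wd i j) (levelSet c.ni c.wd i)

/-- The finite word `w` is a prefix (initial segment) of the infinite word `V`. -/
def InfExtends (V : ℕ → Bool) (w : Word) : Prop := ∀ k, k < w.length → w.getD k false = V k

/-- `V = lim_i v_{i,1}` is the infinite word determined by the construction. -/
def RankConstruction.HasLimit {n : ℕ} (c : RankConstruction n) (V : ℕ → Bool) : Prop :=
  (∀ i, InfExtends V (c.wd i 1)) ∧ ∀ m : ℕ, ∃ i, m ≤ (c.wd i 1).length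

/-- The infinite word `V` has a rank-`n` construction. -/
def HasRankConstr (V : ℕ → Bool) (n : ℕ) : Prop := ∃ c : RankConstruction n, c.HasLimit V

/-! ### Occurrences and subshifts -/

/-- The finite word `u` occurs in the infinite word `V` at position `p`. -/
def OccursAtInf (u : Word) (V : ℕ → Bool) (p : ℕ) : Prop :=
  ∀ k, k < u.length → u.getD k false = V (p + k)

/-- `u` is a subword of the infinite word `V`. -/
def OccursInInf (u : Word) (V : ℕ → Bool) : Prop := ∃ p, OccursAtInf u V p

/-- The finite word `u` occurs in the bi-infinite word `x` at position `p`. -/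
def OccursAtBi (u : Word) (x : ℤ → Bool) (p : ℤ) : Prop :=
  ∀ k : ℕ, k < u.length → u.getD k false = x (p + (k : ℤ))

/-- `u` is a subword of the bi-infinite word `x`. -/
def OccursInBi (u : Word) (x : ℤ → Bool) : Prop := ∃ p, OccursAtBi u x p

/-- The Bernoulli shift `σ` on `{0,1}^ℤ`. -/
def shift (x : ℤ → Bool) : ℤ → Bool := fun k => x (k + 1)

/-- The subshift generated by the infinite word `V`. -/
def XV (V : ℕ → Bool) : Set (ℤ → Bool) := {x | ∀ u : Word, OccursInBi u x → OccursInInf u V}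

/-- The `σ`-orbit of `x`. -/
def sorbit (x : ℤ → Bool) : Set (ℤ → Bool) := Set.range fun n : ℤ => fun k => x (k + n)

/-- A subshift: a nonempty closed shift-invariant subset of `{0,1}^ℤ`. -/
def IsSubshift (X : Set (ℤ → Bool)) : Prop := X.Nonempty ∧ IsClosed X ∧ shift '' X = X

/-- A minimal subshift: every orbit is dense. -/
def MinimalSubshift (X : Set (ℤ → Bool)) : Prop :=
  IsSubshift X ∧ ∀ x ∈ X, X ⊆ closure (sorbit x)

/-- `X` has symbolic rank at most `n`. -/
def SymbRankLE (X : Set (ℤ → Bool)) (n : ℕ) : Prop := ∃ V, HasRankConstr V n ∧ X = XV V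

/-- `X` has symbolic rank exactly `n`. -/
def SymbRankEq (X : Set (ℤ → Bool)) (n : ℕ) : Prop :=
  SymbRankLE X n ∧ ∀ m, SymbRankLE X m → n ≤ m

/-- `M` is a minimal subset of the system `(X, shift)`: a nonempty closed shift-invariant
subset of `X` with no proper nonempty closed shift-invariant subset. -/
def IsMinimalSubsetOf (X M : Set (ℤ → Bool)) : Prop :=
  M.Nonempty ∧ IsClosed M ∧ M ⊆ X ∧ shift '' M = M ∧
    ∀ M', M' ⊆ M → M'.Nonempty → IsClosed M' → shift '' M' = M' → M' = M

/-- A bi-infinite word `x` is built from `v`: there is a strictly increasing bi-infinite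
sequence of positions, with consecutive gaps at least `|v|` and unbounded in both directions,
at each of which `v` occurs, and `x` equals `1` outside those occurrences. -/
def BiBuiltFrom (x : ℤ → Bool) (v : Word) : Prop :=
  ∃ pos : ℤ → ℤ, StrictMono pos ∧
    (∀ i : ℤ, pos i + (v.length : ℤ) ≤ pos (i + 1)) ∧
    (∀ n : ℤ, ∃ i : ℤ, n < pos i) ∧ (∀ n : ℤ, ∃ i : ℤ, pos i < n) ∧
    (∀ i : ℤ, OccursAtBi v x (pos i)) ∧
    (∀ p : ℤ, (∀ i : ℤ, ¬ (pos i ≤ p ∧ p < pos i + (v.length : ℤ))) → x p = true)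

/-! ### General topological dynamics on (Cantor) metric spaces -/

/-- Every orbit of `T` is dense. -/
def MinimalHomeo {X : Type*} [TopologicalSpace X] (T : X ≃ₜ X) : Prop :=
  ∀ x : X, Dense (Set.range fun n : ℤ => (T.toEquiv ^ n) x)

/-- The system `(X, T)` is equicontinuous. -/
def EquicontinuousSys {X : Type*} [MetricSpace X] (T : X ≃ₜ X) : Prop :=
  ∀ ε : ℝ, 0 < ε → ∃ δ : ℝ, 0 < δ ∧
    ∀ (n : ℤ) (x y : X), dist x y < δ → dist ((T.toEquiv ^ n) x) ((T.toEquiv ^ n) y) < ε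

/-- `M` is a minimal set of `(X, T)`. -/
def IsMinimalSet {X : Type*} [TopologicalSpace X] (T : X → X) (M : Set X) : Prop :=
  M.Nonempty ∧ IsClosed M ∧ T '' M = M ∧
    ∀ M', M' ⊆ M → M'.Nonempty → IsClosed M' → T '' M' = M' → M' = M

/-- `(X, T)` is essentially minimal: it has a unique minimal set. -/
def EssentiallyMinimal {X : Type*} [TopologicalSpace X] (T : X → X) : Prop :=
  ∃! M, IsMinimalSet T M

/-- `A` has the finite covering property: `⋃_{−N ≤ n ≤ N} T^n A = X` for some `N`. -/
def FiniteCovering {X : Type*} [TopologicalSpace X] (T : X ≃ₜ X) (A : Set X) : Prop :=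
  ∃ N : ℕ, (⋃ n ∈ Finset.Icc (-(N : ℤ)) (N : ℤ), ⇑(T.toEquiv ^ n) '' A) = Set.univ

/-- A finite partition of the whole space into clopen sets. -/
def IsClopenPartition {X : Type*} [TopologicalSpace X] (Q : Finset (Set X)) : Prop :=
  (∀ q ∈ Q, IsClopen q) ∧ (⋃ q ∈ Q, q) = Set.univ ∧
    ∀ q ∈ Q, ∀ q' ∈ Q, q ≠ q' → Disjoint q q'

/-- A Kakutani–Rohlin partition of `(X, T)`: clopen bases `B 0, …, B (d−1)` with heights
`h 0, …, h (d−1)` such that the sets `T^j (B k)` (`j < h k`) form a partition of `X` and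
`⋃_k T^{h k} (B k) = ⋃_k B k`. -/
structure KRPart {X : Type*} [TopologicalSpace X] (T : X → X) where
  d : ℕ
  B : Fin d → Set X
  h : Fin d → ℕ
  d_pos : 0 < d
  h_pos : ∀ k, 0 < h k
  clopen : ∀ k, IsClopen (B k)
  disj : ∀ (k k' : Fin d) (j j' : ℕ), j < h k → j' < h k' → (k, j) ≠ (k', j') →
    Disjoint (T^[j] '' B k) (T^[j'] '' B k')
  cover : (⋃ k, ⋃ j ∈ Finset.range (h k), T^[j] '' B k) = Set.univ
  base_eq : (⋃ k, T^[h k] '' B k) = ⋃ k, B k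

/-- The base of a Kakutani–Rohlin partition. -/
def KRPart.base {X : Type*} [TopologicalSpace X] {T : X → X} (P : KRPart T) : Set X :=
  ⋃ k, P.B k

/-- `(X, T)` has topological rank at most `m` (Kakutani–Rohlin characterization). -/
def TopRankLEGen {X : Type*} [MetricSpace X] (T : X → X) (m : ℕ) : Prop :=
  ∃ x : X, ∀ ε : ℝ, 0 < ε → ∃ P : KRPart T, P.d ≤ m ∧
    (∀ (k : Fin P.d) (j : ℕ), j < P.h k → Metric.diam (T^[j] '' P.B k) < ε) ∧
    Metric.diam P.base < ε ∧ x ∈ P.base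

/-! ### Kakutani–Rohlin partitions and topological rank for subshifts -/

/-- A Kakutani–Rohlin partition of the subshift `(X, σ)`. -/
structure KRPartOn (X : Set (ℤ → Bool)) where
  d : ℕ
  B : Fin d → Set (ℤ → Bool)
  h : Fin d → ℕ
  d_pos : 0 < d
  h_pos : ∀ k, 0 < h k
  subset : ∀ k, B k ⊆ X
  clopen : ∀ k, IsClopen {y : X | (y : ℤ → Bool) ∈ B k}
  disj : ∀ (k k' : Fin d) (j j' : ℕ), j < h k → j' < h k' → (k, j) ≠ (k', j') →
    Disjoint (shift^[j] '' B k) (shift^[j'] '' B k')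
  cover : (⋃ k, ⋃ j ∈ Finset.range (h k), shift^[j] '' B k) = X
  base_eq : (⋃ k, shift^[h k] '' B k) = ⋃ k, B k

/-- The base of a Kakutani–Rohlin partition of a subshift. -/
def KRPartOn.base {X : Set (ℤ → Bool)} (P : KRPartOn X) : Set (ℤ → Bool) := ⋃ k, P.B k

/-- All elements of `A` agree on the window `[−N, N]`; for the canonical metric on `2^ℤ`
this says exactly that `diam(A) ≤ 2^{−N}`. -/
def AgreeOn (N : ℕ) (A : Set (ℤ → Bool)) : Prop :=
  ∀ y ∈ A, ∀ z ∈ A, ∀ k : ℤ, |k| ≤ (N : ℤ) → y k = z k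

/-- The subshift `(X, σ)` has topological rank at most `m` (Kakutani–Rohlin
characterization, with smallness of diameters expressed by agreement on windows,
matching the canonical compatible metric on `2^ℤ`). -/
def TopRankLE (X : Set (ℤ → Bool)) (m : ℕ) : Prop :=
  ∃ x ∈ X, ∀ N : ℕ, ∃ P : KRPartOn X, P.d ≤ m ∧
    (∀ (k : Fin P.d) (j : ℕ), j < P.h k → AgreeOn N (shift^[j] '' P.B k)) ∧
    AgreeOn N P.base ∧ x ∈ P.base

/-! ### Factor maps and conjugacy -/

/-- `φ` is a (topological) factor map from the subshift `Y` onto the subshift `X`. -/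
def IsFactorMapOn (Y X : Set (ℤ → Bool)) (φ : (ℤ → Bool) → (ℤ → Bool)) : Prop :=
  ContinuousOn φ Y ∧ φ '' Y = X ∧ ∀ y ∈ Y, φ (shift y) = shift (φ y)

/-- `X` is a topological factor of `Y`. -/
def SubshiftFactor (Y X : Set (ℤ → Bool)) : Prop := ∃ φ, IsFactorMapOn Y X φ

/-- The subshifts `Y` and `X` are conjugate. -/
def SubshiftConjugate (Y X : Set (ℤ → Bool)) : Prop :=
  ∃ φ, IsFactorMapOn Y X φ ∧ Set.InjOn φ Y

/-- `(X, T)` is conjugate to the subshift `(Y, σ)`. -/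
def ConjugateToSubshift {X : Type*} [TopologicalSpace X] (T : X ≃ₜ X) (Y : Set (ℤ → Bool)) :
    Prop :=
  ∃ φ : X → (ℤ → Bool), Continuous φ ∧ Function.Injective φ ∧ Set.range φ = Y ∧
    ∀ x, φ (T x) = shift (φ x)

/-- The Boolean algebra of sets generated by `G`. -/
inductive GenBoolAlg {X : Type*} (G : Set (Set X)) : Set X → Prop
  | basic (A : Set X) : A ∈ G → GenBoolAlg G A
  | empty : GenBoolAlg G ∅
  | compl (A : Set X) : GenBoolAlg G A → GenBoolAlg G Aᶜ
  | union (A B : Set X) : GenBoolAlg G A → GenBoolAlg G B → GenBoolAlg G (A ∪ B)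

/-- `(T, A)` is generating: the smallest Boolean algebra containing all `T^n A` contains
every clopen set. -/
def Generating {X : Type*} [TopologicalSpace X] (T : X ≃ₜ X) (A : Set X) : Prop :=
  ∀ U : Set X, IsClopen U → GenBoolAlg {B : Set X | ∃ n : ℤ, B = ⇑(T.toEquiv ^ n) '' A} U

/-- The return-times word `Ret_A(x₀) ∈ 2^ℤ` of `x₀` to `A`. -/
noncomputable def retWord {X : Type*} [TopologicalSpace X] (T : X ≃ₜ X) (A : Set X) (x₀ : X) : ℤ → Bool :=
  fun n => @ite _ ((T.toEquiv ^ n) x₀ ∈ A) (Classical.propDecidable _) true false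

section Aux

variable {X : Type*}

private lemma zpow_apply_neg (e : X ≃ X) (n : ℤ) (x : X) : (e ^ n).symm x = (e ^ (-n)) x := by
  rw [← Equiv.Perm.inv_def, ← zpow_neg]

private lemma mem_zpow_image (e : X ≃ X) (n : ℤ) (B : Set X) (x : X) :
    x ∈ ⇑(e ^ n) '' B ↔ (e ^ (-n)) x ∈ B := by
  rw [Set.mem_image_equiv, zpow_apply_neg]

private lemma apply_symm_eq (e : X ≃ X) (n : ℤ) (x : X) :
    (e ^ n) (e.symm x) = (e ^ (n - 1)) x := by
  have h : e.symm = e ^ (-1 : ℤ) := by rw [zpow_neg, zpow_one, Equiv.Perm.inv_def]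
  rw [h, ← Equiv.Perm.mul_apply, ← zpow_add, ← sub_eq_add_neg]

private lemma mem_zpow_inv (e : X ≃ X) {M : Set X}
    (h1 : ∀ x ∈ M, e x ∈ M) (h2 : ∀ x ∈ M, e.symm x ∈ M) :
    ∀ (n : ℤ), ∀ x ∈ M, (e ^ n) x ∈ M := by
  intro n
  induction n using Int.induction_on with
  | zero => intro x hx; simpa using hx
  | succ n ih =>
      intro x hx
      have h : (e ^ ((n : ℤ) + 1)) x = (e ^ (n : ℤ)) (e x) := by
        rw [zpow_add_one]; rfl
      rw [h]; exact ih _ (h1 x hx)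
  | pred n ih =>
      intro x hx
      have h : (e ^ (-(n : ℤ) - 1)) x = (e ^ (-(n : ℤ))) (e.symm x) := by
        rw [zpow_sub_one]; rfl
      rw [h]; exact ih _ (h2 x hx)

variable [TopologicalSpace X]

private lemma contPow (T : X ≃ₜ X) : ∀ n : ℤ, Continuous ⇑(T.toEquiv ^ n) := by
  intro n
  induction n using Int.induction_on with
  | zero => simpa using continuous_id
  | succ n ih =>
      have h : ⇑(T.toEquiv ^ ((n : ℤ) + 1)) = ⇑(T.toEquiv ^ (n : ℤ)) ∘ ⇑T := by
        funext x; rw [zpow_add_one]; rfl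
      rw [h]; exact ih.comp T.continuous
  | pred n ih =>
      have h : ⇑(T.toEquiv ^ (-(n : ℤ) - 1)) = ⇑(T.toEquiv ^ (-(n : ℤ))) ∘ ⇑T.symm := by
        funext x; rw [zpow_sub_one]; rfl
      rw [h]; exact ih.comp T.symm.continuous

private lemma isClopen_zpow_image (T : X ≃ₜ X) {B : Set X} (hB : IsClopen B) (n : ℤ) :
    IsClopen (⇑(T.toEquiv ^ n) '' B) := by
  have h : ⇑(T.toEquiv ^ n) '' B = ⇑(T.toEquiv ^ (-n)) ⁻¹' B :=
    Set.ext fun x => mem_zpow_image _ _ _ _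
  rw [h]; exact hB.preimage (contPow T _)

private lemma invariance_mem (T : X ≃ₜ X) {M : Set X} (hMinv : ⇑T '' M = M) :
    (∀ x ∈ M, T.toEquiv x ∈ M) ∧ (∀ x ∈ M, T.toEquiv.symm x ∈ M) := by
  constructor
  · intro x hx
    have : (⇑T : X → X) x ∈ ⇑T '' M := ⟨x, hx, rfl⟩
    rwa [hMinv] at this
  · intro x hx
    rw [← hMinv] at hx
    obtain ⟨a, ha, rfl⟩ := hx
    simpa using ha

end Aux

section Main

variable {X : Type*} [MetricSpace X] [CompactSpace X] [Nonempty X]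

private lemma meets_of_finiteCovering (T : X ≃ₜ X) {B M : Set X} (hFC : FiniteCovering T B)
    (hMne : M.Nonempty) (hMinv : ⇑T '' M = M) : ∃ p, p ∈ B ∧ p ∈ M := by
  obtain ⟨N, hN⟩ := hFC
  obtain ⟨m, hm⟩ := hMne
  have hm' : m ∈ (⋃ n ∈ Finset.Icc (-(N : ℤ)) (N : ℤ), ⇑(T.toEquiv ^ n) '' B) := by
    rw [hN]; trivial
  obtain ⟨n, _, hmem⟩ := Set.mem_iUnion₂.mp hm'
  obtain ⟨h1, h2⟩ := invariance_mem T hMinv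
  refine ⟨(T.toEquiv ^ (-n)) m, (mem_zpow_image _ _ _ _).mp hmem, mem_zpow_inv _ h1 h2 _ _ hm⟩

private lemma finiteCovering_of_iUnion (T : X ≃ₜ X) {B : Set X} (hB : IsClopen B)
    (h : (⋃ n : ℤ, ⇑(T.toEquiv ^ n) '' B) = Set.univ) : FiniteCovering T B := by
  obtain ⟨t, ht⟩ := isCompact_univ.elim_finite_subcover (fun n : ℤ => ⇑(T.toEquiv ^ n) '' B)
    (fun n => (isClopen_zpow_image T hB n).isOpen) (by rw [h])
  refine ⟨t.sup Int.natAbs, Set.eq_univ_of_univ_subset ?_⟩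
  intro x hx
  obtain ⟨n, hn, hxn⟩ := Set.mem_iUnion₂.mp (ht hx)
  refine Set.mem_iUnion₂.mpr ⟨n, ?_, hxn⟩
  have hle := Finset.le_sup (f := Int.natAbs) hn
  simp only [Finset.mem_Icc]
  omega

private lemma exists_minimal (T : X ≃ₜ X) {C : Set X} (hne : C.Nonempty) (hcl : IsClosed C)
    (hinv : ⇑T '' C = C) : ∃ M, M ⊆ C ∧ IsMinimalSet ⇑T M := by
  set S : Set (Set X) := {M | M.Nonempty ∧ IsClosed M ∧ ⇑T '' M = M} with hS
  have H : ∀ c ⊆ S, IsChain (· ⊆ ·) c → c.Nonempty → ∃ lb ∈ S, ∀ s ∈ c, lb ⊆ s := by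
    intro c hcS hchain hcne
    haveI : Nonempty c := hcne.to_subtype
    refine ⟨⋂₀ c, ⟨?_, ?_, ?_⟩, fun s hs => Set.sInter_subset_of_mem hs⟩
    · exact IsCompact.nonempty_sInter_of_directed_nonempty_isCompact_isClosed
        (IsChain.directedOn hchain.symm)
        (fun U hU => (hcS hU).1) (fun U hU => (hcS hU).2.1.isCompact)
        (fun U hU => (hcS hU).2.1)
    · exact isClosed_sInter fun U hU => (hcS hU).2.1
    · ext x
      rw [show (⇑T : X → X) = ⇑T.toEquiv from rfl, Set.mem_image_equiv]
      simp only [Set.mem_sInter]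
      constructor
      · intro hx U hU
        have := (invariance_mem T (hcS hU).2.2).1 _ (hx U hU)
        simpa using this
      · intro hx U hU
        exact (invariance_mem T (hcS hU).2.2).2 _ (hx U hU)
  obtain ⟨m, hmC, hmin⟩ := zorn_superset_nonempty S H C ⟨hne, hcl, hinv⟩
  obtain ⟨hmne, hmcl, hminv⟩ := hmin.1
  refine ⟨m, hmC, hmne, hmcl, hminv, ?_⟩
  intro M' hsub hne' hcl' hinv'
  exact le_antisymm hsub (hmin.2 ⟨hne', hcl', hinv'⟩ hsub)



end Main

/-- Proposition 3.1. A Cantor system `(X,T)` with a compatible metric `≤ 1`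
is essentially minimal iff every clopen set with the finite covering property contains a clopen
subset with the finite covering property of at most half the diameter. -/
theorem statement_0 {X : Type*} [MetricSpace X] [CompactSpace X] [Nonempty X]
    [TotallyDisconnectedSpace X] (hPerf : Perfect (Set.univ : Set X))
    (hbd : ∀ x y : X, dist x y ≤ 1) (T : X ≃ₜ X) :
    EssentiallyMinimal ⇑T ↔
      ∀ A : Set X, IsClopen A → FiniteCovering T A →
        ∃ B : Set X, B ⊆ A ∧ IsClopen B ∧ FiniteCovering T B ∧
          Metric.diam B ≤ Metric.diam A / 2 := by
  constructor
  · rintro ⟨M, hM, huniq⟩ A hA hFC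
    obtain ⟨p, hpA, hpM⟩ := meets_of_finiteCovering T hFC hM.1 hM.2.2.1
    have hAbd : Bornology.IsBounded A := isCompact_univ.isBounded.subset (Set.subset_univ _)
    obtain ⟨b, hb, hbp⟩ : ∃ y ∈ A, y ≠ p := by
      have h := accPt_iff_nhds.mp (hPerf.acc p (Set.mem_univ p)) A
        (hA.isOpen.mem_nhds hpA)
      obtain ⟨y, ⟨hyA, _⟩, hyp⟩ := h
      exact ⟨y, hyA, hyp⟩
    have hdpos : 0 < Metric.diam A :=
      lt_of_lt_of_le (dist_pos.mpr hbp) (Metric.dist_le_diam_of_mem hAbd hb hpA)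
    obtain ⟨B, hBc, hpB, hBsub⟩ := compact_exists_isClopen_in_isOpen
      (hA.isOpen.inter Metric.isOpen_ball)
      ⟨hpA, Metric.mem_ball_self (by positivity : (0:ℝ) < Metric.diam A / 4)⟩
    refine ⟨B, hBsub.trans Set.inter_subset_left, hBc, ?_, ?_⟩
    · -- finite covering of B
      apply finiteCovering_of_iUnion T hBc
      by_contra hne
      set C := (⋃ n : ℤ, ⇑(T.toEquiv ^ n) '' B)ᶜ with hCdef
      have hCne : C.Nonempty := Set.nonempty_compl.mpr hne
      have hCclosed : IsClosed C :=
        (isOpen_iUnion fun n => (isClopen_zpow_image T hBc n).isOpen).isClosed_compl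
      have hkey : ∀ x : X, x ∈ C ↔ ∀ n : ℤ, (T.toEquiv ^ n) x ∉ B := by
        intro x
        simp only [hCdef, Set.mem_compl_iff, Set.mem_iUnion, mem_zpow_image, not_exists]
        constructor
        · intro h n
          have := h (-n); simpa using this
        · intro h n; exact h (-n)
      have hCinv : ⇑T '' C = C := by
        ext x
        rw [show (⇑T : X → X) = ⇑T.toEquiv from rfl, Set.mem_image_equiv, hkey, hkey]
        constructor
        · intro h n
          have := h (n + 1)
          rwa [apply_symm_eq, add_sub_cancel_right] at this
        · intro h n
          rw [apply_symm_eq]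
          exact h (n - 1)
      obtain ⟨M', hM'C, hM'⟩ := exists_minimal T hCne hCclosed hCinv
      have hMM : M' = M := huniq M' hM'
      have hpC : p ∈ C := hM'C (hMM ▸ hpM)
      exact (hkey p).mp hpC 0 (by simpa using hpB)
    · calc Metric.diam B ≤ Metric.diam (Metric.ball p (Metric.diam A / 4)) :=
            Metric.diam_mono (hBsub.trans Set.inter_subset_right) Metric.isBounded_ball
        _ ≤ 2 * (Metric.diam A / 4) := Metric.diam_ball (by positivity)
        _ = Metric.diam A / 2 := by ring
  · intro h
    have huniv : ⇑T '' (Set.univ : Set X) = Set.univ := by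
      rw [Set.image_univ]
      exact T.surjective.range_eq
    obtain ⟨M, _, hM⟩ := exists_minimal T ⟨Classical.arbitrary X, Set.mem_univ _⟩
      isClosed_univ huniv
    refine ⟨M, hM, ?_⟩
    intro M₂ hM₂
    -- the shrinking sequence
    have key : ∀ k : ℕ, ∃ Bk : Set X, IsClopen Bk ∧ FiniteCovering T Bk ∧
        Metric.diam Bk ≤ (1/2 : ℝ) ^ k := by
      intro k
      induction k with
      | zero =>
          refine ⟨Set.univ, isClopen_univ, ⟨0, ?_⟩, ?_⟩
          · apply Set.eq_univ_of_univ_subset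
            intro x _
            refine Set.mem_iUnion₂.mpr ⟨0, by simp, ?_⟩
            simpa using Set.mem_univ x
          · simpa using Metric.diam_le_of_forall_dist_le zero_le_one
              fun x _ y _ => hbd x y
      | succ k ih =>
          obtain ⟨A, hA, hFC, hd⟩ := ih
          obtain ⟨B, hBA, hB, hBFC, hBd⟩ := h A hA hFC
          refine ⟨B, hB, hBFC, ?_⟩
          calc Metric.diam B ≤ Metric.diam A / 2 := hBd
            _ ≤ (1/2 : ℝ) ^ k / 2 := by linarith
            _ = (1/2 : ℝ) ^ (k + 1) := by rw [pow_succ]; ring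
    by_cases hmeet : (M₂ ∩ M).Nonempty
    · have hinter : ⇑T '' (M₂ ∩ M) = M₂ ∩ M := by
        rw [Set.image_inter T.injective, hM₂.2.2.1, hM.2.2.1]
      have h1 := hM₂.2.2.2 (M₂ ∩ M) Set.inter_subset_left hmeet
        (hM₂.2.1.inter hM.2.1) hinter
      have h2 := hM.2.2.2 (M₂ ∩ M) Set.inter_subset_right hmeet
        (hM₂.2.1.inter hM.2.1) hinter
      rw [← h1, h2]
    · have hdisj : Disjoint M₂ M := Set.disjoint_iff_inter_eq_empty.mpr
        (Set.not_nonempty_iff_eq_empty.mp hmeet)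
      obtain ⟨δ, hδ, hth⟩ := hdisj.exists_thickenings hM₂.2.1.isCompact hM.2.1
      obtain ⟨k, hk⟩ := exists_pow_lt_of_lt_one hδ (by norm_num : (1/2 : ℝ) < 1)
      obtain ⟨Bk, hBk, hBkFC, hBkd⟩ := key k
      obtain ⟨x, hxB, hxM₂⟩ := meets_of_finiteCovering T hBkFC hM₂.1 hM₂.2.2.1
      obtain ⟨y, hyB, hyM⟩ := meets_of_finiteCovering T hBkFC hM.1 hM.2.2.1
      have hBbd : Bornology.IsBounded Bk := isCompact_univ.isBounded.subset (Set.subset_univ _)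
      have hdist : dist y x < δ :=
        lt_of_le_of_lt ((Metric.dist_le_diam_of_mem hBbd hyB hxB).trans hBkd) hk
      have hy1 : y ∈ Metric.thickening δ M₂ :=
        Metric.mem_thickening_iff.mpr ⟨x, hxM₂, hdist⟩
      have hy2 : y ∈ Metric.thickening δ M :=
        Metric.mem_thickening_iff.mpr ⟨y, hyM, by simpa using hδ⟩
      exact (Set.disjoint_left.mp hth hy1 hy2).elim


end SubshiftRank
end

section
/- Let (X,T) be an essentially minimal Cantor system, let ρ ≤ 1 be a compatible metric on X, and let n ≥ 1. Then the following are equivalent: (A) there exists x ∈ X such that for every ε > 0 there is a Kakutani–Rohlin partition P of (X,T) with at most n towers such that diam(A) < ε for every A ∈ P, diam(B(P)) < ε, and x ∈ B(P); (B) for every clopen subset Z ⊆ X with the finite covering property (i.e. ⋃_{−N ≤ k ≤ N} T^k Z = X for some N ∈ ℕ) and every finite partition Q of X into clopen sets, there is a Kakutani–Rohlin partition P of (X,T) with at most n towers such that B(P) ⊆ Z, diam(B(P)) ≤ diam(Z)/2, and P refines Q (every element of Q is a union of elements of P). -/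
namespace SubshiftRank

/-! ### Auxiliary lemmas for `statement_1` -/

section Aux

variable {X : Type*} [TopologicalSpace X]

private lemma continuous_perm_zpow (T : X ≃ₜ X) : ∀ m : ℤ, Continuous ⇑(T.toEquiv ^ m) := by
  intro m
  match m with
  | Int.ofNat k =>
      have : ⇑(T.toEquiv ^ (Int.ofNat k)) = (⇑T)^[k] := by
        rw [Int.ofNat_eq_coe, zpow_natCast, Equiv.Perm.coe_pow]; rfl
      rw [this]
      exact T.continuous.iterate k
  | Int.negSucc k =>
      have : ⇑(T.toEquiv ^ (Int.negSucc k)) = (⇑T.symm)^[k+1] := by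
        rw [zpow_negSucc, ← inv_pow, Equiv.Perm.coe_pow]
        have : (T.toEquiv)⁻¹ = T.symm.toEquiv := rfl
        rw [this]; rfl
      rw [this]
      exact T.symm.continuous.iterate (k+1)

/-- `T ^ m` as a homeomorphism, for `m : ℤ`. -/
private def zpowHomeo (T : X ≃ₜ X) (m : ℤ) : X ≃ₜ X where
  toEquiv := T.toEquiv ^ m
  continuous_toFun := continuous_perm_zpow T m
  continuous_invFun := by
    have h : (T.toEquiv ^ m).symm = T.toEquiv ^ (-m) := by
      rw [zpow_neg]; rfl
    show Continuous ⇑(T.toEquiv ^ m).symm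
    rw [h]; exact continuous_perm_zpow T (-m)

private lemma zpowHomeo_apply (T : X ≃ₜ X) (m : ℤ) (x : X) :
    zpowHomeo T m x = (T.toEquiv ^ m) x := rfl

private lemma zpowHomeo_comm (T : X ≃ₜ X) (m : ℤ) (y : X) :
    zpowHomeo T m (T y) = T (zpowHomeo T m y) := by
  have h : Commute T.toEquiv (T.toEquiv ^ m) := (Commute.refl _).zpow_right m
  have := congrArg (fun f => f y) h.eq.symm
  simpa [Equiv.Perm.mul_apply, zpowHomeo_apply] using this

private lemma perm_zpow_natCast_coe (T : X ≃ₜ X) (j : ℕ) :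
    ⇑(T.toEquiv ^ ((j : ℕ) : ℤ)) = (⇑T)^[j] := by
  rw [zpow_natCast, Equiv.Perm.coe_pow]; rfl

private lemma iterate_image_comm {T : X → X} (e : X ≃ₜ X) (hc : ∀ y, e (T y) = T (e y))
    (j : ℕ) (s : Set X) : T^[j] '' (⇑e '' s) = ⇑e '' (T^[j] '' s) := by
  have hs : Function.Semiconj ⇑e T T := hc
  have h2 := (hs.iterate_right j).comp_eq
  rw [← Set.image_comp, ← Set.image_comp, h2]

/-- Conjugate a Kakutani–Rohlin partition by a homeomorphism commuting with `T`. -/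
private def KRPart.conj {T : X → X} (P : KRPart T) (e : X ≃ₜ X)
    (hc : ∀ y, e (T y) = T (e y)) : KRPart T where
  d := P.d
  B k := ⇑e '' P.B k
  h := P.h
  d_pos := P.d_pos
  h_pos := P.h_pos
  clopen k := by
    show IsClopen (⇑e '' P.B k)
    rw [show (⇑e '' P.B k) = ⇑e.toEquiv.symm ⁻¹' P.B k from
      Equiv.image_eq_preimage_symm _ _]
    exact (P.clopen k).preimage e.symm.continuous
  disj k k' j j' hj hj' hne := by
    rw [iterate_image_comm e hc, iterate_image_comm e hc,
      Set.disjoint_image_iff e.injective]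
    exact P.disj k k' j j' hj hj' hne
  cover := by
    have : (⋃ k, ⋃ j ∈ Finset.range (P.h k), T^[j] '' (⇑e '' P.B k))
        = ⇑e '' (⋃ k, ⋃ j ∈ Finset.range (P.h k), T^[j] '' P.B k) := by
      simp only [iterate_image_comm e hc, Set.image_iUnion]
    rw [this, P.cover, Set.image_univ, e.surjective.range_eq]
  base_eq := by
    have h1 : (⋃ k, T^[P.h k] '' (⇑e '' P.B k))
        = ⇑e '' (⋃ k, T^[P.h k] '' P.B k) := by
      simp only [iterate_image_comm e hc, Set.image_iUnion]
    rw [h1, P.base_eq, Set.image_iUnion]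

private lemma KRPart.conj_base {T : X → X} (P : KRPart T) (e : X ≃ₜ X)
    (hc : ∀ y, e (T y) = T (e y)) : (P.conj e hc).base = ⇑e '' P.base := by
  simp only [KRPart.base, KRPart.conj, Set.image_iUnion]

private lemma KRPart.base_clopen {T : X → X} (P : KRPart T) : IsClopen P.base := by
  have : P.base = ⋃ k ∈ (Finset.univ : Finset (Fin P.d)), P.B k := by
    simp [KRPart.base]
  rw [this]
  exact Set.Finite.isClopen_biUnion (Finset.finite_toSet _) (fun k _ => P.clopen k)

private lemma KRPart.base_nonempty [Nonempty X] {T : X → X} (P : KRPart T) :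
    P.base.Nonempty := by
  have y := Classical.arbitrary X
  have hy : y ∈ ⋃ k, ⋃ j ∈ Finset.range (P.h k), T^[j] '' P.B k :=
    P.cover ▸ Set.mem_univ y
  obtain ⟨k, hk⟩ := Set.mem_iUnion.1 hy
  obtain ⟨j, -, b, hb, -⟩ := Set.mem_iUnion₂.1 hk
  exact ⟨b, Set.mem_iUnion.2 ⟨k, hb⟩⟩

private lemma KRPart.base_finiteCovering (T : X ≃ₜ X) (P : KRPart ⇑T) :
    FiniteCovering T P.base := by
  classical
  refine ⟨(Finset.univ : Finset (Fin P.d)).sup P.h, ?_⟩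
  apply Set.eq_univ_of_forall
  intro y
  have hy : y ∈ ⋃ k, ⋃ j ∈ Finset.range (P.h k), (⇑T)^[j] '' P.B k :=
    P.cover ▸ Set.mem_univ y
  obtain ⟨k, hk⟩ := Set.mem_iUnion.1 hy
  obtain ⟨j, hj, hyj⟩ := Set.mem_iUnion₂.1 hk
  rw [Finset.mem_range] at hj
  have hjH : j ≤ (Finset.univ : Finset (Fin P.d)).sup P.h :=
    (Nat.lt_of_lt_of_le hj (Finset.le_sup (Finset.mem_univ k))).le
  have hjZ : ((j : ℕ) : ℤ) ∈ Finset.Icc (-(((Finset.univ : Finset (Fin P.d)).sup P.h : ℕ) : ℤ))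
      (((Finset.univ : Finset (Fin P.d)).sup P.h : ℕ) : ℤ) :=
    Finset.mem_Icc.2 ⟨le_trans (neg_nonpos.mpr (Int.natCast_nonneg _)) (Int.natCast_nonneg _),
      by exact_mod_cast hjH⟩
  refine Set.mem_biUnion hjZ ?_
  rw [perm_zpow_natCast_coe T j]
  exact Set.image_mono (Set.subset_iUnion P.B k) hyj

end Aux

private lemma exists_clopen_partition_mesh {X : Type*} [MetricSpace X] [CompactSpace X]
    [TotallyDisconnectedSpace X] (ε : ℝ) (hε : 0 < ε) :
    ∃ Q : Finset (Set X), IsClopenPartition Q ∧ ∀ q ∈ Q, Metric.diam q < ε := by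
  have hbasis := @loc_compact_Haus_tot_disc_of_zero_dim X _ _ _ _
  have hC : ∀ x : X, ∃ C : Set X, IsClopen C ∧ x ∈ C ∧ C ⊆ Metric.ball x (ε/3) := by
    intro x
    have hxb : x ∈ Metric.ball x (ε/3) := Metric.mem_ball_self (by linarith)
    obtain ⟨v, hv, hxv, hvsub⟩ := hbasis.exists_subset_of_mem_open hxb Metric.isOpen_ball
    exact ⟨v, hv, hxv, hvsub⟩
  choose C hCclopen hCmem hCsub using hC
  obtain ⟨t, ht⟩ := isCompact_univ.elim_finite_subcover C (fun x => (hCclopen x).2)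
    (fun x _ => Set.mem_iUnion.2 ⟨x, hCmem x⟩)
  classical
  let l := t.toList
  let g : ℕ → Set X := fun i => if h : i < l.length then C (l.get ⟨i, h⟩) else ∅
  have hgclopen : ∀ i, IsClopen (g i) := by
    intro i; by_cases h : i < l.length
    · simp only [g, dif_pos h]; exact hCclopen _
    · simp only [g, dif_neg h]; exact isClopen_empty
  have hgdiam : ∀ i, Metric.diam (g i) < ε := by
    intro i; by_cases h : i < l.length
    · simp only [g, dif_pos h]
      calc Metric.diam (C (l.get ⟨i, h⟩))
          ≤ Metric.diam (Metric.ball (l.get ⟨i, h⟩) (ε/3)) :=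
            Metric.diam_mono (hCsub _) Metric.isBounded_ball
        _ ≤ 2 * (ε/3) := Metric.diam_ball (by linarith)
        _ < ε := by linarith
    · simp only [g, dif_neg h, Metric.diam_empty]; exact hε
  let q : ℕ → Set X := fun i => g i \ ⋃ j ∈ Finset.range i, g j
  have hqclopen : ∀ i, IsClopen (q i) := by
    intro i
    have : IsClopen (⋃ j ∈ Finset.range i, g j) := by
      apply Set.Finite.isClopen_biUnion (Finset.finite_toSet _)
      intro j _; exact hgclopen j
    exact (hgclopen i).diff this
  have hqsub : ∀ i, q i ⊆ g i := fun i => Set.diff_subset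
  have hqdisj : ∀ i j, i ≠ j → Disjoint (q i) (q j) := by
    intro i j hij
    rcases hij.lt_or_gt with h | h
    · refine Set.disjoint_left.2 fun x hxi hxj => ?_
      exact (hxj.2 (Set.mem_biUnion (Finset.mem_range.2 h) hxi.1)).elim
    · refine Set.disjoint_left.2 fun x hxi hxj => ?_
      exact hxi.2 (Set.mem_biUnion (Finset.mem_range.2 h) hxj.1)
  have hcover : (⋃ i ∈ Finset.range l.length, q i) = Set.univ := by
    apply Set.eq_univ_of_forall
    intro x
    have hx : ∃ i, x ∈ g i := by
      have := ht (Set.mem_univ x)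
      obtain ⟨y, hyt, hxy⟩ := Set.mem_iUnion₂.1 this
      obtain ⟨i, hi⟩ := List.mem_iff_get.1 (Finset.mem_toList.2 hyt)
      exact ⟨i, by
        have hi' : l.get ⟨(i : ℕ), (show (i : ℕ) < l.length from i.isLt)⟩ = y := hi
        simp only [g]; rw [dif_pos (show (i : ℕ) < l.length from i.isLt), hi']; exact hxy⟩
    let i := Nat.find hx
    have hix : x ∈ g i := Nat.find_spec hx
    have hilt : i < l.length := by
      by_contra h
      simp only [g, dif_neg h] at hix
      exact hix
    refine Set.mem_biUnion (Finset.mem_range.2 hilt) ⟨hix, ?_⟩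
    intro hmem
    obtain ⟨j, hj, hxj⟩ := Set.mem_iUnion₂.1 hmem
    simp only [Finset.mem_range] at hj
    exact Nat.find_min hx hj hxj
  refine ⟨(Finset.range l.length).image q, ⟨?_, ?_, ?_⟩, ?_⟩
  · intro s hs; obtain ⟨i, _, rfl⟩ := Finset.mem_image.1 hs; exact hqclopen i
  · rw [Finset.set_biUnion_finset_image]
    exact hcover
  · intro s hs s' hs' hne
    obtain ⟨i, _, rfl⟩ := Finset.mem_image.1 hs
    obtain ⟨j, _, rfl⟩ := Finset.mem_image.1 hs'
    exact hqdisj i j (fun h => hne (by rw [h]))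
  · intro s hs; obtain ⟨i, _, rfl⟩ := Finset.mem_image.1 hs
    exact lt_of_le_of_lt (Metric.diam_mono (hqsub i)
      (isCompact_univ.isBounded.subset (Set.subset_univ _))) (hgdiam i)

/-- Theorem 3.3, (2) ⇔ (3). For an essentially minimal Cantor system and
`n ≥ 1`, the pointwise Kakutani–Rohlin smallness condition with at most `n` towers is
equivalent to the refinement condition. -/
theorem statement_1 {X : Type*} [MetricSpace X] [CompactSpace X] [Nonempty X]
    [TotallyDisconnectedSpace X] (hPerf : Perfect (Set.univ : Set X))
    (hbd : ∀ x y : X, dist x y ≤ 1) (T : X ≃ₜ X)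
    (hEM : EssentiallyMinimal ⇑T) (n : ℕ) (hn : 1 ≤ n) :
    (∃ x : X, ∀ ε : ℝ, 0 < ε → ∃ P : KRPart ⇑T, P.d ≤ n ∧
        (∀ (k : Fin P.d) (j : ℕ), j < P.h k → Metric.diam ((⇑T)^[j] '' P.B k) < ε) ∧
        Metric.diam P.base < ε ∧ x ∈ P.base) ↔
    (∀ Z : Set X, IsClopen Z → FiniteCovering T Z →
      ∀ Q : Finset (Set X), IsClopenPartition Q →
        ∃ P : KRPart ⇑T, P.d ≤ n ∧ P.base ⊆ Z ∧
          Metric.diam P.base ≤ Metric.diam Z / 2 ∧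
          ∀ (k : Fin P.d) (j : ℕ), j < P.h k → ∃ q ∈ Q, (⇑T)^[j] '' P.B k ⊆ q) := by
  classical
  have hbdd : ∀ s : Set X, Bornology.IsBounded s :=
    fun s => isCompact_univ.isBounded.subset (Set.subset_univ s)
  constructor
  · -- (A) ⇒ (B)
    rintro ⟨x, hx⟩ Z hZclop hZFC Q hQ
    -- find m with T^m x ∈ Z
    obtain ⟨N, hN⟩ := hZFC
    have hxmem : x ∈ ⋃ m ∈ Finset.Icc (-(N : ℤ)) (N : ℤ), ⇑(T.toEquiv ^ m) '' Z := by
      rw [hN]; exact Set.mem_univ x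
    obtain ⟨m, hm, z, hzZ, hzx⟩ := Set.mem_iUnion₂.1 hxmem
    set e := zpowHomeo T (-m) with he
    have hexZ : e x ∈ Z := by
      have hez : e x = z := by
        rw [zpowHomeo_apply, ← hzx, ← Equiv.Perm.mul_apply, zpow_neg,
          inv_mul_cancel, Equiv.Perm.one_apply]
      rwa [hez]
    have hcomm : ∀ y, e (T y) = T (e y) := zpowHomeo_comm T (-m)
    -- Q is nonempty
    obtain ⟨q₀, hq₀⟩ : ∃ q, q ∈ Q := by
      have hx0 : (Classical.arbitrary X) ∈ ⋃ q ∈ Q, (q : Set X) :=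
        hQ.2.1 ▸ Set.mem_univ _
      obtain ⟨q, hq, -⟩ := Set.mem_iUnion₂.1 hx0
      exact ⟨q, hq⟩
    -- Lebesgue number for Q
    obtain ⟨δQ, hδQ, hleb⟩ := lebesgue_number_lemma_of_metric (s := (Set.univ : Set X))
      (c := fun q : {q // q ∈ Q} => (q : Set X)) isCompact_univ
      (fun q => (hQ.1 q q.2).isOpen)
      (by
        intro y _
        have hy : y ∈ ⋃ q ∈ Q, (q : Set X) := hQ.2.1 ▸ Set.mem_univ y
        obtain ⟨q, hq, hyq⟩ := Set.mem_iUnion₂.1 hy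
        exact Set.mem_iUnion.2 ⟨⟨q, hq⟩, hyq⟩)
    -- uniform continuity of e
    have hUC := Metric.uniformContinuous_iff.1
      (CompactSpace.uniformContinuous_of_continuous e.continuous)
    obtain ⟨δ1, hδ1pos, hδ1⟩ := hUC δQ hδQ
    obtain ⟨δ2, hδ2pos, hδ2⟩ : ∃ δ2 > 0, ∀ u v : X, dist u v < δ2 →
        Metric.diam Z ≤ 0 ∨ dist (e u) (e v) < Metric.diam Z / 2 := by
      rcases lt_or_ge 0 (Metric.diam Z) with h | h
      · obtain ⟨δ2, hp, hs⟩ := hUC (Metric.diam Z / 2) (by linarith)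
        exact ⟨δ2, hp, fun u v h' => Or.inr (hs h')⟩
      · exact ⟨1, one_pos, fun _ _ _ => Or.inl h⟩
    obtain ⟨δ3, hδ3pos, hball3⟩ := Metric.isOpen_iff.1
      (hZclop.isOpen.preimage e.continuous) x hexZ
    set ε := min δ1 (min δ2 δ3) with hεdef
    have hεpos : 0 < ε := lt_min hδ1pos (lt_min hδ2pos hδ3pos)
    obtain ⟨P, hPd, hPlev, hPdiam, hxbase⟩ := hx ε hεpos
    have hεδ1 : ε ≤ δ1 := min_le_left _ _
    have hεδ2 : ε ≤ δ2 := le_trans (min_le_right _ _) (min_le_left _ _)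
    have hεδ3 : ε ≤ δ3 := le_trans (min_le_right _ _) (min_le_right _ _)
    refine ⟨P.conj e hcomm, hPd, ?_, ?_, ?_⟩
    · -- base ⊆ Z
      rw [KRPart.conj_base]
      rintro - ⟨u, hu, rfl⟩
      apply hball3
      have : dist u x ≤ Metric.diam P.base :=
        Metric.dist_le_diam_of_mem (hbdd _) hu hxbase
      exact Metric.mem_ball.2 (lt_of_le_of_lt this (lt_of_lt_of_le hPdiam hεδ3))
    · -- diam of base
      rw [KRPart.conj_base]
      rcases lt_or_ge 0 (Metric.diam Z) with hZd | hZd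
      · refine Metric.diam_le_of_forall_dist_le (by linarith) ?_
        rintro - ⟨u, hu, rfl⟩ - ⟨v, hv, rfl⟩
        have hduv : dist u v < δ2 :=
          lt_of_le_of_lt (Metric.dist_le_diam_of_mem (hbdd _) hu hv)
            (lt_of_lt_of_le hPdiam hεδ2)
        rcases hδ2 u v hduv with h | h
        · linarith
        · exact h.le
      · -- diam Z = 0
        have hZ0 : Metric.diam Z = 0 := le_antisymm hZd Metric.diam_nonneg
        have hsubZ : ⇑e '' P.base ⊆ Z := by
          rintro - ⟨u, hu, rfl⟩
          apply hball3
          have : dist u x ≤ Metric.diam P.base :=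
            Metric.dist_le_diam_of_mem (hbdd _) hu hxbase
          exact Metric.mem_ball.2 (lt_of_le_of_lt this (lt_of_lt_of_le hPdiam hεδ3))
        have := Metric.diam_mono hsubZ (hbdd Z)
        rw [hZ0] at this ⊢
        linarith
    · -- refinement of Q
      intro k j hj
      have hBk : (⇑T)^[j] '' ((P.conj e hcomm).B k) = ⇑e '' ((⇑T)^[j] '' P.B k) :=
        iterate_image_comm e hcomm j (P.B k)
      rcases Set.eq_empty_or_nonempty ((⇑T)^[j] '' P.B k) with hL | ⟨a, ha⟩
      · exact ⟨q₀, hq₀, by rw [hBk, hL]; simp⟩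
      · obtain ⟨q, hqball⟩ := hleb (e a) (Set.mem_univ _)
        refine ⟨q, q.2, ?_⟩
        rw [hBk]
        rintro - ⟨b, hb, rfl⟩
        apply hqball
        have hdab : dist b a < δ1 :=
          lt_of_le_of_lt (Metric.dist_le_diam_of_mem (hbdd _) hb ha)
            (lt_of_lt_of_le (hPlev k j hj) hεδ1)
        exact Metric.mem_ball.2 (hδ1 hdab)
  · -- (B) ⇒ (A)
    intro hB
    have step : ∀ Z : Set X, IsClopen Z → FiniteCovering T Z → ∀ i : ℕ,
        ∃ P : KRPart ⇑T, P.d ≤ n ∧ P.base ⊆ Z ∧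
          Metric.diam P.base ≤ Metric.diam Z / 2 ∧
          ∀ (k : Fin P.d) (j : ℕ), j < P.h k →
            Metric.diam ((⇑T)^[j] '' P.B k) < 1 / ((i : ℝ) + 1) := by
      intro Z hZ hFC i
      obtain ⟨Q, hQpart, hQmesh⟩ :=
        exists_clopen_partition_mesh (X := X) (1 / ((i : ℝ) + 1)) (by positivity)
      obtain ⟨P, h1, h2, h3, h4⟩ := hB Z hZ hFC Q hQpart
      refine ⟨P, h1, h2, h3, fun k j hj => ?_⟩
      obtain ⟨q, hq, hsub⟩ := h4 k j hj
      exact lt_of_le_of_lt (Metric.diam_mono hsub (hbdd q)) (hQmesh q hq)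
    have hFCuniv : FiniteCovering T (Set.univ : Set X) := by
      refine ⟨0, ?_⟩
      apply Set.eq_univ_of_forall
      intro y
      have h0 : (0 : ℤ) ∈ Finset.Icc (-((0 : ℕ) : ℤ)) ((0 : ℕ) : ℤ) := by simp
      refine Set.mem_biUnion h0 ?_
      refine ⟨y, Set.mem_univ y, ?_⟩
      simp
    let next : KRPart ⇑T → ℕ → KRPart ⇑T := fun P i =>
      Classical.choose (step P.base P.base_clopen (P.base_finiteCovering T) i)
    let P0 : KRPart ⇑T := Classical.choose (step Set.univ isClopen_univ hFCuniv 0)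
    have hP0 := Classical.choose_spec (step Set.univ isClopen_univ hFCuniv 0)
    have hnext : ∀ (P : KRPart ⇑T) (i : ℕ), (next P i).d ≤ n ∧
        (next P i).base ⊆ P.base ∧
        Metric.diam (next P i).base ≤ Metric.diam P.base / 2 ∧
        ∀ (k : Fin (next P i).d) (j : ℕ), j < (next P i).h k →
          Metric.diam ((⇑T)^[j] '' (next P i).B k) < 1 / ((i : ℝ) + 1) :=
      fun P i => Classical.choose_spec (step P.base P.base_clopen (P.base_finiteCovering T) i)
    let Pseq : ℕ → KRPart ⇑T := fun i => Nat.rec P0 (fun i Pi => next Pi (i + 1)) i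
    have hPsucc : ∀ i, Pseq (i + 1) = next (Pseq i) (i + 1) := fun i => rfl
    have hd : ∀ i, (Pseq i).d ≤ n := by
      intro i
      cases i with
      | zero => exact hP0.1
      | succ i => exact (hnext (Pseq i) (i + 1)).1
    have hmesh : ∀ i, ∀ (k : Fin (Pseq i).d) (j : ℕ), j < (Pseq i).h k →
        Metric.diam ((⇑T)^[j] '' (Pseq i).B k) < 1 / ((i : ℝ) + 1) := by
      intro i
      cases i with
      | zero => exact hP0.2.2.2
      | succ i => exact (hnext (Pseq i) (i + 1)).2.2.2
    have hsub : ∀ i, (Pseq (i + 1)).base ⊆ (Pseq i).base :=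
      fun i => (hnext (Pseq i) (i + 1)).2.1
    have hdiamuniv : Metric.diam (Set.univ : Set X) ≤ 1 :=
      Metric.diam_le_of_forall_dist_le zero_le_one (fun a _ b _ => hbd a b)
    have hdiam : ∀ i, Metric.diam (Pseq i).base ≤ (1 / 2 : ℝ) ^ i := by
      intro i
      induction i with
      | zero =>
          have h1 : Metric.diam (Pseq 0).base ≤ Metric.diam (Set.univ : Set X) / 2 :=
            hP0.2.2.1
          simp only [pow_zero]
          linarith
      | succ i ih =>
          have h1 := (hnext (Pseq i) (i + 1)).2.2.1
          rw [pow_succ]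
          calc Metric.diam (Pseq (i + 1)).base ≤ Metric.diam (Pseq i).base / 2 := h1
            _ ≤ (1 / 2 : ℝ) ^ i * (1 / 2) := by linarith
    obtain ⟨x, hxmem⟩ :=
      IsCompact.nonempty_iInter_of_sequence_nonempty_isCompact_isClosed
        (fun i => (Pseq i).base) hsub (fun i => (Pseq i).base_nonempty)
        ((Pseq 0).base_clopen.isClosed.isCompact)
        (fun i => (Pseq i).base_clopen.isClosed)
    refine ⟨x, fun ε hε => ?_⟩
    obtain ⟨i1, hi1⟩ := exists_nat_one_div_lt hε
    obtain ⟨i2, hi2⟩ := exists_pow_lt_of_lt_one hε (by norm_num : (1 / 2 : ℝ) < 1)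
    set i := max i1 i2 with hi
    refine ⟨Pseq i, hd i, ?_, ?_, Set.mem_iInter.1 hxmem i⟩
    · intro k j hj
      have h1 := hmesh i k j hj
      have h2 : (1 : ℝ) / ((i : ℝ) + 1) ≤ 1 / ((i1 : ℝ) + 1) := by
        apply one_div_le_one_div_of_le (by positivity)
        have : (i1 : ℝ) ≤ (i : ℝ) := by exact_mod_cast le_max_left i1 i2
        linarith
      linarith [hi1]
    · calc Metric.diam (Pseq i).base ≤ (1 / 2 : ℝ) ^ i := hdiam i
        _ ≤ (1 / 2 : ℝ) ^ i2 :=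
            pow_le_pow_of_le_one (by norm_num) (by norm_num) (le_max_right i1 i2)
        _ < ε := hi2

end SubshiftRank
end

section
/- Let 𝒵 = {x ∈ {0,1}^ℤ : for all n there is m > n with x(m) = 0, and for all n there is m > n with x(−m) = 0}. Let x ∈ 𝒵 and v ∈ ℱ. Then the following are equivalent: (i) x is built from v; (ii) for every m ∈ ℕ there exists a finite word u built from {v} such that the restriction x↾[−m,m] is a subword of u. -/
namespace SubshiftRank

/-! ### Auxiliary machinery for Statement 3 -/

section Aux3

variable (v : Word)

/-- The word `v 1^{s₁} v 1^{s₂} ⋯ v` determined by the list of spacer lengths. -/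
def assemble : List ℕ → Word
  | [] => v
  | s :: ss => v ++ (spacer s ++ assemble ss)

/-- The starting offsets of the copies of `v` inside `assemble v ss`. -/
def offs : List ℕ → List ℕ
  | [] => [0]
  | s :: ss => 0 :: (offs ss).map (· + (v.length + s))

lemma assemble_length_cons (s : ℕ) (ss : List ℕ) :
    (assemble v (s :: ss)).length = v.length + s + (assemble v ss).length := by
  simp [assemble, spacer]; omega

lemma offs_le : ∀ (ss : List ℕ), ∀ q ∈ offs v ss, q + v.length ≤ (assemble v ss).length
  | [] => by simp [offs, assemble]
  | s :: ss => by
      intro q hq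
      rw [assemble_length_cons]
      simp only [offs, List.mem_cons, List.mem_map] at hq
      rcases hq with rfl | ⟨q', hq', rfl⟩
      · omega
      · have := offs_le ss q' hq'
        omega

lemma offs_match : ∀ (ss : List ℕ), ∀ q ∈ offs v ss, ∀ k, k < v.length →
    (assemble v ss).getD (q + k) false = v.getD k false
  | [] => by
      intro q hq k hk
      simp only [offs, List.mem_singleton] at hq
      subst hq
      simp [assemble]
  | s :: ss => by
      intro q hq k hk
      simp only [offs, List.mem_cons, List.mem_map] at hq
      rcases hq with rfl | ⟨q', hq', rfl⟩
      · show (v ++ (spacer s ++ assemble v ss)).getD (0 + k) false = _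
        rw [zero_add, List.getD_append _ _ _ _ hk]
      · show (v ++ (spacer s ++ assemble v ss)).getD (q' + (v.length + s) + k) false = _
        rw [List.getD_append_right _ _ _ _ (by omega),
            List.getD_append_right _ _ _ _ (by simp [spacer]; omega)]
        have h1 : q' + (v.length + s) + k - v.length - (spacer s).length = q' + k := by
          simp [spacer]; omega
        rw [h1]
        exact offs_match ss q' hq' k hk

lemma offs_spacing : ∀ (ss : List ℕ), ∀ q ∈ offs v ss, ∀ q' ∈ offs v ss,
    q < q' → q + v.length ≤ q'
  | [] => by simp [offs]
  | s :: ss => by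
      intro q hq q' hq' hlt
      simp only [offs, List.mem_cons, List.mem_map] at hq hq'
      rcases hq with rfl | ⟨r, hr, rfl⟩ <;> rcases hq' with rfl | ⟨r', hr', rfl⟩
      · omega
      · omega
      · omega
      · have := offs_spacing ss r hr r' hr' (by omega)
        omega

lemma assemble_true : ∀ (ss : List ℕ), ∀ idx, idx < (assemble v ss).length →
    (∀ q ∈ offs v ss, ¬(q ≤ idx ∧ idx < q + v.length)) →
    (assemble v ss).getD idx false = true
  | [] => by
      intro idx h1 h2
      exact ((h2 0 (by simp [offs])) ⟨Nat.zero_le _, by simpa [assemble] using h1⟩).elim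
  | s :: ss => by
      intro idx h1 h2
      have h0 := h2 0 (by simp [offs])
      have hL : v.length ≤ idx := by omega
      show (v ++ (spacer s ++ assemble v ss)).getD idx false = true
      rw [List.getD_append_right _ _ _ _ hL]
      rcases lt_or_ge (idx - v.length) s with hs | hs
      · rw [List.getD_append _ _ _ _ (by simpa [spacer] using hs)]
        rw [List.getD_eq_getElem _ _ (by simpa [spacer] using hs)]
        simp [spacer]
      · rw [List.getD_append_right _ _ _ _ (by simpa [spacer] using hs)]
        have hlen : idx - v.length - (spacer s).length = idx - (v.length + s) := by
          simp [spacer]; omega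
        rw [hlen]
        apply assemble_true ss
        · have := assemble_length_cons v s ss
          omega
        · intro q hq
          have := h2 (q + (v.length + s)) (by
            simp only [offs, List.mem_cons, List.mem_map]
            exact Or.inr ⟨q, hq, rfl⟩)
          omega

lemma assemble_builtFrom {ss : List ℕ} (h : ss ≠ []) : BuiltFrom (assemble v ss) {v} := by
  refine ⟨⟨ss.map (fun s => (v, s)), v⟩, ⟨by simpa using h, ?_⟩, ?_⟩
  · intro w hw
    simp only [Building.pieces, List.map_map, List.mem_append, List.mem_map,
      List.mem_singleton] at hw
    rcases hw with ⟨a, _, rfl⟩ | rfl <;> rfl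
  · show Building.word _ = _
    clear h
    induction ss with
    | nil => rfl
    | cons s ss ih =>
        simp only [Building.word, List.map_cons, List.foldr_cons] at ih ⊢
        rw [ih]
        simp [assemble]

lemma word_aux : ∀ (l : List (Word × ℕ)), (∀ p ∈ l, p.1 = v) →
    List.foldr (fun p acc => p.1 ++ spacer p.2 ++ acc) v l = assemble v (l.map Prod.snd)
  | [] => fun _ => rfl
  | p :: l => by
      intro h
      simp only [List.foldr_cons, List.map_cons]
      rw [h p (List.mem_cons_self),
        word_aux l (fun q hq => h q (List.mem_cons_of_mem _ hq))]
      simp [assemble]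

lemma word_eq_assemble (b : Building) (hb : b.FromSet {v}) :
    b.word = assemble v (b.pairs.map Prod.snd) ∧ b.pairs.map Prod.snd ≠ [] := by
  obtain ⟨hne, hall⟩ := hb
  have hlast : b.last = v := hall _ (by simp [Building.pieces])
  have hfst : ∀ p ∈ b.pairs, p.1 = v := by
    intro p hp
    apply hall
    simp only [Building.pieces, List.mem_append, List.mem_map]
    exact Or.inl ⟨p, hp, rfl⟩
  constructor
  · rw [Building.word, hlast]
    exact word_aux v b.pairs hfst
  · simpa using hne

lemma occursAtBi_append {w₁ w₂ : Word} {x : ℤ → Bool} {p : ℤ}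
    (h₁ : OccursAtBi w₁ x p) (h₂ : OccursAtBi w₂ x (p + w₁.length)) :
    OccursAtBi (w₁ ++ w₂) x p := by
  intro k hk
  simp only [List.length_append] at hk
  rcases lt_or_ge k w₁.length with h | h
  · rw [List.getD_append _ _ _ _ h]
    exact h₁ k h
  · rw [List.getD_append_right _ _ _ _ h]
    have := h₂ (k - w₁.length) (by omega)
    rw [this]
    congr 1
    omega

lemma occursAtBi_spacer {x : ℤ → Bool} {p : ℤ} {s : ℕ}
    (h : ∀ k : ℕ, k < s → x (p + k) = true) : OccursAtBi (spacer s) x p := by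
  intro k hk
  simp only [spacer, List.length_replicate] at hk
  rw [List.getD_eq_getElem _ _ (by simpa [spacer] using hk)]
  simp only [spacer, List.getElem_replicate]
  exact (h k hk).symm

/-- The list of gap lengths between consecutive occurrences. -/
def gaps (pos : ℤ → ℤ) (L : ℕ) : ℤ → ℕ → List ℕ
  | _, 0 => []
  | a, n + 1 => (pos (a + 1) - pos a - L).toNat :: gaps pos L (a + 1) n

lemma gaps_ne_nil (pos : ℤ → ℤ) (L : ℕ) (a : ℤ) {n : ℕ} (h : n ≠ 0) :
    gaps pos L a n ≠ [] := by
  cases n with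
  | zero => exact absurd rfl h
  | succ n => simp [gaps]

lemma occurs_assemble (x : ℤ → Bool) (pos : ℤ → ℤ) (hmono : StrictMono pos)
    (hgap : ∀ i, pos i + (v.length : ℤ) ≤ pos (i + 1))
    (hocc : ∀ i, OccursAtBi v x (pos i))
    (htrue : ∀ p : ℤ, (∀ i : ℤ, ¬(pos i ≤ p ∧ p < pos i + (v.length : ℤ))) → x p = true) :
    ∀ (n : ℕ) (a : ℤ),
      OccursAtBi (assemble v (gaps pos v.length a n)) x (pos a) ∧
      ((assemble v (gaps pos v.length a n)).length : ℤ) = pos (a + n) + v.length - pos a := by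
  intro n
  induction n with
  | zero =>
      intro a
      refine ⟨hocc a, ?_⟩
      show ((assemble v []).length : ℤ) = _
      simp only [assemble, Nat.cast_ofNat, add_zero, Nat.cast_zero]
      ring
  | succ n ih =>
      intro a
      have hgz : (((pos (a + 1) - pos a - v.length).toNat : ℤ)) =
          pos (a + 1) - pos a - v.length :=
        Int.toNat_of_nonneg (by have := hgap a; omega)
      have hrest := ih (a + 1)
      have hsp : OccursAtBi (spacer (pos (a + 1) - pos a - v.length).toNat) x
          (pos a + v.length) := by
        apply occursAtBi_spacer
        intro k hk
        apply htrue
        intro j hj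
        rcases le_or_gt j a with h | h
        · have h2 : pos j ≤ pos a := hmono.le_iff_le.2 h
          omega
        · have h2 : pos (a + 1) ≤ pos j := hmono.le_iff_le.2 (by omega)
          omega
      have hshow : gaps pos v.length a (n + 1) =
          (pos (a + 1) - pos a - v.length).toNat :: gaps pos v.length (a + 1) n := rfl
      rw [hshow]
      constructor
      · show OccursAtBi (v ++ (spacer _ ++ assemble v (gaps pos v.length (a + 1) n))) x (pos a)
        apply occursAtBi_append (hocc a)
        apply occursAtBi_append hsp
        have harg : pos a + (v.length : ℤ) +
            ((spacer (pos (a + 1) - pos a - v.length).toNat).length : ℤ) = pos (a + 1) := by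
          simp only [spacer, List.length_replicate]
          omega
        rw [harg]
        exact hrest.1
      · rw [assemble_length_cons]
        obtain ⟨-, hlen'⟩ := hrest
        have key : pos (a + ((n + 1 : ℕ) : ℤ)) = pos (a + 1 + (n : ℤ)) := by
          congr 1
          push_cast
          ring
        rw [key]
        push_cast
        omega

lemma infix_of_occurs {u w : Word} {x : ℤ → Bool} {p q : ℤ}
    (hu : OccursAtBi u x p) (hw : OccursAtBi w x q) (h1 : p ≤ q)
    (h2 : q + w.length ≤ p + u.length) : w <:+: u := by
  set d := (q - p).toNat with hd
  have hdz : (d : ℤ) = q - p := Int.toNat_of_nonneg (by omega)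
  have hlen : d + w.length ≤ u.length := by omega
  have hw' : w = (u.drop d).take w.length := by
    apply List.ext_getElem
    · rw [List.length_take, List.length_drop]
      omega
    · intro i h₁ h₂
      rw [List.getElem_take, List.getElem_drop]
      have e1 := hu (d + i) (by omega)
      have e2 := hw i h₁
      rw [List.getD_eq_getElem _ _ (by omega)] at e1
      rw [List.getD_eq_getElem _ _ h₁] at e2
      rw [e2, e1]
      congr 1
      omega
  rw [hw']
  exact ((List.take_prefix _ _).isInfix).trans ((List.drop_suffix _ _).isInfix)

lemma occurs_getD_of_infix {w u : Word} (h : w <:+: u) :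
    ∃ t : ℕ, t + w.length ≤ u.length ∧
      ∀ j, j < w.length → u.getD (t + j) false = w.getD j false := by
  obtain ⟨s, e, hse⟩ := h
  refine ⟨s.length, ?_, ?_⟩
  · rw [← hse]
    simp only [List.length_append]
    omega
  · intro j hj
    rw [← hse, List.append_assoc, List.getD_append_right _ _ _ _ (Nat.le_add_right _ _)]
    simp only [Nat.add_sub_cancel_left]
    rw [List.getD_append _ _ _ _ hj]
end Aux3

lemma exists_enum (P : ℤ → Prop)
    (habove : ∀ n : ℤ, ∃ p, P p ∧ n < p)
    (hbelow : ∀ n : ℤ, ∃ p, P p ∧ p < n) :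
    ∃ pos : ℤ → ℤ, StrictMono pos ∧ (∀ i, P (pos i)) ∧ ∀ p, P p → ∃ i, pos i = p := by
  classical
  have hnext : ∀ p : ℤ, ∃ k : ℕ, P (p + 1 + k) := by
    intro p
    obtain ⟨q, hq, hpq⟩ := habove p
    exact ⟨(q - p - 1).toNat, by rw [show p + 1 + ((q - p - 1).toNat : ℤ) = q by omega]; exact hq⟩
  have hprevex : ∀ p : ℤ, ∃ k : ℕ, P (p - 1 - k) := by
    intro p
    obtain ⟨q, hq, hpq⟩ := hbelow p
    exact ⟨(p - 1 - q).toNat, by rw [show p - 1 - ((p - 1 - q).toNat : ℤ) = q by omega]; exact hq⟩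
  set F : ℤ → ℤ := fun p => p + 1 + Nat.find (hnext p) with hF
  set G : ℤ → ℤ := fun p => p - 1 - Nat.find (hprevex p) with hG
  have hFP : ∀ p, P (F p) := fun p => Nat.find_spec (hnext p)
  have hGP : ∀ p, P (G p) := fun p => Nat.find_spec (hprevex p)
  have hFlt : ∀ p, p < F p := by
    intro p
    have h0 : (0 : ℤ) ≤ (Nat.find (hnext p) : ℤ) := by positivity
    simp only [hF]
    omega
  have hGlt : ∀ p, G p < p := by
    intro p
    have h0 : (0 : ℤ) ≤ (Nat.find (hprevex p) : ℤ) := by positivity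
    simp only [hG]
    omega
  have hFmin : ∀ p q, p < q → q < F p → ¬ P q := by
    intro p q h1 h2 hq
    simp only [hF] at h2
    have hlt : (q - p - 1).toNat < Nat.find (hnext p) := by omega
    exact Nat.find_min (hnext p) hlt
      (by rw [show p + 1 + ((q - p - 1).toNat : ℤ) = q by omega]; exact hq)
  have hGmax : ∀ p q, G p < q → q < p → ¬ P q := by
    intro p q h1 h2 hq
    simp only [hG] at h1
    have hlt : (p - 1 - q).toNat < Nat.find (hprevex p) := by omega
    exact Nat.find_min (hprevex p) hlt
      (by rw [show p - 1 - ((p - 1 - q).toNat : ℤ) = q by omega]; exact hq)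
  obtain ⟨c, hc, -⟩ := habove 0
  have hFc : ∀ n : ℕ, P (F^[n] c) := by
    intro n
    induction n with
    | zero => exact hc
    | succ n ih => rw [Function.iterate_succ_apply']; exact hFP _
  have hGc : ∀ n : ℕ, P (G^[n] c) := by
    intro n
    induction n with
    | zero => exact hc
    | succ n ih => rw [Function.iterate_succ_apply']; exact hGP _
  refine ⟨fun i => if 0 ≤ i then F^[i.toNat] c else G^[(-i).toNat] c, ?_, ?_, ?_⟩
  · apply strictMono_int_of_lt_succ
    intro i
    rcases le_or_gt 0 i with h | h
    · rw [if_pos h, if_pos (by omega)]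
      rw [show (i + 1).toNat = i.toNat + 1 by omega, Function.iterate_succ_apply']
      exact hFlt _
    · rcases eq_or_lt_of_le (show i ≤ -1 by omega) with h1 | h1
      · rw [h1]
        rw [if_neg (by omega), show (-1 : ℤ) + 1 = 0 by norm_num, if_pos le_rfl]
        rw [show ((-(-1) : ℤ)).toNat = 1 by rfl, show ((0 : ℤ)).toNat = 0 by rfl]
        simpa using hGlt c
      · rw [if_neg (by omega), if_neg (by omega)]
        rw [show (-i).toNat = (-(i + 1)).toNat + 1 by omega, Function.iterate_succ_apply']
        exact hGlt _
  · intro i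
    show P (if 0 ≤ i then F^[i.toNat] c else G^[(-i).toNat] c)
    split
    · exact hFc _
    · exact hGc _
  · have claim1 : ∀ N : ℕ, ∀ p, P p → c ≤ p → p - c ≤ N → ∃ n : ℕ, F^[n] c = p := by
      intro N
      induction N with
      | zero =>
          intro p hp h1 h2
          exact ⟨0, by simp only [Function.iterate_zero, id_eq]; omega⟩
      | succ N ih =>
          intro p hp h1 h2
          rcases eq_or_lt_of_le h1 with h | h
          · exact ⟨0, by simp only [Function.iterate_zero, id_eq]; omega⟩
          · have hq2 : c ≤ G p := by
              by_contra hcon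
              exact hGmax p c (by omega) h hc
            obtain ⟨n, hn⟩ := ih (G p) (hGP p) hq2 (by have := hGlt p; omega)
            refine ⟨n + 1, ?_⟩
            rw [Function.iterate_succ_apply', hn]
            have hle : F (G p) ≤ p := by
              by_contra hcon
              exact hFmin (G p) p (hGlt p) (by omega) hp
            rcases eq_or_lt_of_le hle with h' | h'
            · exact h'
            · exact absurd (hFP (G p)) (hGmax p (F (G p)) (hFlt (G p)) h')
    have claim2 : ∀ N : ℕ, ∀ p, P p → p ≤ c → c - p ≤ N → ∃ n : ℕ, G^[n] c = p := by
      intro N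
      induction N with
      | zero =>
          intro p hp h1 h2
          exact ⟨0, by simp only [Function.iterate_zero, id_eq]; omega⟩
      | succ N ih =>
          intro p hp h1 h2
          rcases eq_or_lt_of_le h1 with h | h
          · exact ⟨0, by simp only [Function.iterate_zero, id_eq]; omega⟩
          · have hq2 : F p ≤ c := by
              by_contra hcon
              exact hFmin p c h (by omega) hc
            obtain ⟨n, hn⟩ := ih (F p) (hFP p) hq2 (by have := hFlt p; omega)
            refine ⟨n + 1, ?_⟩
            rw [Function.iterate_succ_apply', hn]
            have hle : p ≤ G (F p) := by
              by_contra hcon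
              exact hGmax (F p) p (by omega) (hFlt p) hp
            rcases eq_or_lt_of_le hle with h' | h'
            · exact h'.symm
            · exact absurd (hGP (F p)) (hFmin p (G (F p)) h' (hGlt (F p)))
    intro p hp
    rcases le_or_gt c p with h | h
    · obtain ⟨n, hn⟩ := claim1 (p - c).toNat p hp h (by omega)
      refine ⟨(n : ℤ), ?_⟩
      show (if 0 ≤ (n : ℤ) then F^[((n : ℤ)).toNat] c else G^[(-(n : ℤ)).toNat] c) = p
      rw [if_pos (by omega)]
      simpa using hn
    · obtain ⟨n, hn⟩ := claim2 (c - p).toNat p hp (by omega) (by omega)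
      rcases Nat.eq_zero_or_pos n with h0 | h0
      · exfalso
        subst h0
        simp only [Function.iterate_zero, id_eq] at hn
        omega
      · refine ⟨-(n : ℤ), ?_⟩
        show (if 0 ≤ -(n : ℤ) then F^[(-(n : ℤ)).toNat] c else G^[(-(-(n : ℤ))).toNat] c) = p
        rw [if_neg (by omega)]
        simpa using hn

/-- Lemma 5.1. For `x ∈ 𝒵` and `v ∈ ℱ`: `x` is built from `v` iff every
central window of `x` is a subword of some finite word built from `v`. -/
theorem statement_3 (x : ℤ → Bool)
    (hx1 : ∀ n : ℤ, ∃ m : ℤ, n < m ∧ x m = false)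
    (hx2 : ∀ n : ℤ, ∃ m : ℤ, n < m ∧ x (-m) = false)
    (v : Word) (hv : v ∈ FF) :
    BiBuiltFrom x v ↔
      ∀ m : ℕ, ∃ u : Word, BuiltFrom u {v} ∧
        (List.ofFn fun j : Fin (2 * m + 1) => x (-(m : ℤ) + (j : ℕ))) <:+: u := by
  constructor
  · rintro ⟨pos, hmono, hgap, habove, hbelow, hocc, htrue⟩ m
    obtain ⟨a, ha⟩ := hbelow (-(m : ℤ) + 1)
    obtain ⟨b, hb⟩ := habove (m : ℤ)
    have hab : a < b := hmono.lt_iff_lt.1 (by omega)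
    set n := (b - a).toNat with hn
    have hn1 : n ≠ 0 := by omega
    obtain ⟨hoccu, hlenu⟩ := occurs_assemble v x pos hmono hgap hocc htrue n a
    have e : a + (n : ℤ) = b := by omega
    rw [e] at hlenu
    refine ⟨assemble v (gaps pos v.length a n),
      assemble_builtFrom v (gaps_ne_nil pos v.length a hn1), ?_⟩
    have hwocc : OccursAtBi (List.ofFn fun j : Fin (2 * m + 1) => x (-(m : ℤ) + (j : ℕ)))
        x (-(m : ℤ)) := by
      intro k hk
      rw [List.length_ofFn] at hk
      rw [List.getD_eq_getElem _ _ (by rw [List.length_ofFn]; exact hk), List.getElem_ofFn]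
    exact infix_of_occurs hoccu hwocc (by omega)
      (by rw [List.length_ofFn]; push_cast; omega)
  · intro hr
    classical
    have hL : 1 ≤ v.length := List.length_pos_iff.2 hv.1
    have main : ∀ m : ℕ, ∃ (ss : List ℕ) (r : ℤ), ss ≠ [] ∧ r ≤ -(m : ℤ) ∧
        ∀ q : ℤ, -(m : ℤ) ≤ q → q ≤ (m : ℤ) →
          (q - r).toNat < (assemble v ss).length ∧
          (assemble v ss).getD (q - r).toNat false = x q := by
      intro m
      obtain ⟨u, hu, hinf⟩ := hr m
      obtain ⟨b, hb, hw⟩ := hu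
      obtain ⟨hweq, hne⟩ := word_eq_assemble v b hb
      have hua : u = assemble v (b.pairs.map Prod.snd) := by rw [← hw, hweq]
      rw [hua] at hinf
      obtain ⟨t, ht1, ht2⟩ := occurs_getD_of_infix hinf
      rw [List.length_ofFn] at ht1
      refine ⟨b.pairs.map Prod.snd, -(m : ℤ) - t, hne, by omega, ?_⟩
      intro q h1 h2
      have hqt : (q - (-(m : ℤ) - t)).toNat = t + (q + m).toNat := by omega
      have hjlt : (q + m).toNat <
          (List.ofFn fun j : Fin (2 * m + 1) => x (-(m : ℤ) + (j : ℕ))).length := by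
        rw [List.length_ofFn]; omega
      have hwin : (List.ofFn fun j : Fin (2 * m + 1) =>
          x (-(m : ℤ) + (j : ℕ))).getD ((q + m).toNat) false = x q := by
        rw [List.getD_eq_getElem _ _ hjlt, List.getElem_ofFn]
        congr 1
        show -(m : ℤ) + (((q + m).toNat : ℕ) : ℤ) = q
        omega
      have hgd := ht2 ((q + m).toNat) (by rw [List.length_ofFn]; omega)
      rw [hwin] at hgd
      exact ⟨by rw [hqt]; omega, by rw [hqt]; exact hgd⟩
    choose S r hSne hrle hSmatch using main
    set χm : ℕ → ℤ → Bool :=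
      fun m p => if (∃ q ∈ offs v (S m), p = r m + (q : ℤ)) then true else false with hχm
    have hiff : ∀ m p, (χm m p = true) ↔ ∃ q ∈ offs v (S m), p = r m + (q : ℤ) := by
      intro m p
      constructor
      · intro h
        by_contra hc
        simp only [hχm, if_neg hc] at h
        exact Bool.false_ne_true h
      · intro h
        simp only [hχm, if_pos h]
    have hG1 : ∀ m p p', χm m p = true → χm m p' = true → p < p' →
        p + (v.length : ℤ) ≤ p' := by
      intro m p p' hp hp' hlt
      obtain ⟨q, hq, rfl⟩ := (hiff m p).1 hp
      obtain ⟨q', hq', rfl⟩ := (hiff m p').1 hp'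
      have := offs_spacing v (S m) q hq q' hq' (by omega)
      omega
    have hG2 : ∀ (m : ℕ) (p : ℤ), χm m p = true → ∀ k : ℕ, k < v.length →
        -(m : ℤ) ≤ p + k → p + k ≤ (m : ℤ) → v.getD k false = x (p + k) := by
      intro m p hp k hk h1 h2
      obtain ⟨q, hq, rfl⟩ := (hiff m p).1 hp
      obtain ⟨hlt, heq⟩ := hSmatch m (r m + q + k) h1 h2
      have hidx : (r m + (q : ℤ) + (k : ℤ) - r m).toNat = q + k := by omega
      rw [hidx] at heq
      rw [← heq]
      exact (offs_match v (S m) q hq k hk).symm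
    have hG3 : ∀ (m : ℕ) (q : ℤ), -(m : ℤ) ≤ q → q ≤ (m : ℤ) → x q = false →
        ∃ p : ℤ, χm m p = true ∧ p ≤ q ∧ q < p + (v.length : ℤ) := by
      intro m q h1 h2 hq
      obtain ⟨hlt, heq⟩ := hSmatch m q h1 h2
      have hnt : ¬ ((assemble v (S m)).getD (q - r m).toNat false = true) := by
        rw [heq, hq]
        exact Bool.false_ne_true
      by_contra hcon
      push_neg at hcon
      refine hnt (assemble_true v (S m) (q - r m).toNat hlt ?_)
      rintro o ho ⟨hc1, hc2⟩
      have hr0 : r m ≤ q := le_trans (hrle m) h1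
      have hp : χm m (r m + o) = true := (hiff m _).2 ⟨o, ho, rfl⟩
      have hcp := hcon (r m + o) hp (by omega)
      omega
    set U : Ultrafilter ℕ := Ultrafilter.of Filter.atTop with hU
    set χ : ℤ → Bool := fun p => if ({m | χm m p = true} ∈ U) then true else false with hχ
    have hχiff : ∀ p, χ p = true ↔ {m | χm m p = true} ∈ U := by
      intro p
      constructor
      · intro h
        by_contra hc
        simp only [hχ, if_neg hc] at h
        exact Bool.false_ne_true h
      · intro h
        simp only [hχ, if_pos h]
    have hagree : ∀ (T : Finset ℤ) (m₀ : ℕ), ∃ m, m₀ ≤ m ∧ ∀ p ∈ T, χm m p = χ p := by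
      intro T m₀
      have h1 : ∀ p : ℤ, {m | χm m p = χ p} ∈ U := by
        intro p
        by_cases h : {m | χm m p = true} ∈ U
        · have hpt : χ p = true := (hχiff p).2 h
          rw [hpt]
          exact h
        · have hc : {m | χm m p = true}ᶜ ∈ U := Ultrafilter.compl_mem_iff_notMem.2 h
          have hfalse : χ p = false := by
            cases hb : χ p with
            | false => rfl
            | true => exact absurd ((hχiff p).1 hb) h
          rw [hfalse]
          refine Filter.mem_of_superset hc fun m hm => ?_
          exact Bool.eq_false_iff.2 hm
      have h2 : (⋂ p ∈ (T : Set ℤ), {m | χm m p = χ p}) ∈ U :=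
        (Filter.biInter_mem T.finite_toSet).2 fun p _ => h1 p
      have h3 : {m | m₀ ≤ m} ∈ U := Ultrafilter.of_le Filter.atTop (Filter.mem_atTop m₀)
      obtain ⟨m, hm⟩ := Filter.nonempty_of_mem (Filter.inter_mem h2 h3)
      refine ⟨m, hm.2, fun p hp => ?_⟩
      have hmem := hm.1
      simp only [Set.mem_iInter, Set.mem_setOf_eq] at hmem
      exact hmem p hp
    have hP1 : ∀ p p', χ p = true → χ p' = true → p < p' → p + (v.length : ℤ) ≤ p' := by
      intro p p' hp hp' hlt
      obtain ⟨m, -, hm⟩ := hagree {p, p'} 0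
      exact hG1 m p p' (by rw [hm p (by simp)]; exact hp)
        (by rw [hm p' (by simp)]; exact hp') hlt
    have hP2 : ∀ p, χ p = true → OccursAtBi v x p := by
      intro p hp
      obtain ⟨m, hm0, hm⟩ := hagree {p} (p.natAbs + v.length)
      intro k hk
      exact hG2 m p (by rw [hm p (by simp)]; exact hp) k hk (by omega) (by omega)
    have hP3 : ∀ q : ℤ, x q = false →
        ∃ p, χ p = true ∧ p ≤ q ∧ q < p + (v.length : ℤ) := by
      intro q hq
      obtain ⟨m, hm0, hm⟩ := hagree (Finset.Icc (q - v.length) q) q.natAbs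
      obtain ⟨p, hp1, hp2, hp3⟩ := hG3 m q (by omega) (by omega) hq
      refine ⟨p, ?_, hp2, hp3⟩
      rw [← hm p (by rw [Finset.mem_Icc]; omega)]
      exact hp1
    have hAbove : ∀ n : ℤ, ∃ p, χ p = true ∧ n < p := by
      intro n
      obtain ⟨z, hz1, hz2⟩ := hx1 (n + v.length)
      obtain ⟨p, hp1, hp2, hp3⟩ := hP3 z hz2
      exact ⟨p, hp1, by omega⟩
    have hBelow : ∀ n : ℤ, ∃ p, χ p = true ∧ p < n := by
      intro n
      obtain ⟨z, hz1, hz2⟩ := hx2 (-n)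
      obtain ⟨p, hp1, hp2, hp3⟩ := hP3 (-z) hz2
      exact ⟨p, hp1, by omega⟩
    obtain ⟨pos, hmono, hmem, hsurj⟩ := exists_enum (fun p => χ p = true) hAbove hBelow
    refine ⟨pos, hmono, ?_, ?_, ?_, ?_, ?_⟩
    · intro i
      exact hP1 _ _ (hmem i) (hmem (i + 1)) (hmono (by omega))
    · intro n
      obtain ⟨p, hp, hnp⟩ := hAbove n
      obtain ⟨i, hi⟩ := hsurj p hp
      exact ⟨i, by omega⟩
    · intro n
      obtain ⟨p, hp, hnp⟩ := hBelow n
      obtain ⟨i, hi⟩ := hsurj p hp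
      exact ⟨i, by omega⟩
    · intro i
      exact hP2 _ (hmem i)
    · intro p hcov
      cases hb : x p with
      | true => rfl
      | false =>
          obtain ⟨p', hp1, hp2, hp3⟩ := hP3 p hb
          obtain ⟨i, hi⟩ := hsurj p' hp1
          exact absurd ⟨by omega, by omega⟩ (hcov i)

end SubshiftRank
end
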